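/- Let m ≥ 1, let P : ℤ → Matrix (Fin 2m) (Fin 2m) ℂ with P(n) Hermitian for all n, and let x, y : ℤ → ℂ^{2m}, written x(n) = (u_x(n), v_x(n)) and y(n) = (u_y(n), v_y(n)) with components in ℂ^m. Define l(z)(n) = J·Δz(n) − P(n)·R(z)(n), where Δz(n) = z(n+1) − z(n), R(z)(n) = (u_z(n+1), v_z(n)), and J = [[0, −I_m], [I_m, 0]]. Then for all integers s ≤ k: Σ_{n=s}^{k} ( R(y)(n)* · l(x)(n) − (l(y)(n))* · R(x)(n) ) = y(k+1)* J x(k+1) − y(s)* J x(s). -/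

import Mathlib

open Matrix

/-- The standard `2m × 2m` symplectic matrix `J = [[0, -I], [I, 0]]`. -/
noncomputable def symplJ (m : ℕ) : Matrix (Fin m ⊕ Fin m) (Fin m ⊕ Fin m) ℂ :=
  fromBlocks 0 (-1) 1 0

/-- The partial right shift operator `R(z)(n) = (u_z(n+1), v_z(n))` for
`z(n) = (u_z(n), v_z(n))`. -/
def pShift {m : ℕ} (z : ℤ → (Fin m ⊕ Fin m) → ℂ) (n : ℤ) : (Fin m ⊕ Fin m) → ℂ :=
  Sum.elim (fun i => z (n + 1) (Sum.inl i)) (fun i => z n (Sum.inr i))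

/-- The discrete Hamiltonian expression `l(z)(n) = J·Δz(n) − P(n)·R(z)(n)`. -/
noncomputable def discrL {m : ℕ} (P : ℤ → Matrix (Fin m ⊕ Fin m) (Fin m ⊕ Fin m) ℂ)
    (z : ℤ → (Fin m ⊕ Fin m) → ℂ) (n : ℤ) : (Fin m ⊕ Fin m) → ℂ :=
  (symplJ m).mulVec (z (n + 1) - z n) - (P n).mulVec (pShift z n)

lemma symplJ_conjTranspose (m : ℕ) : (symplJ m)ᴴ = -(symplJ m) := by
  simp [symplJ, fromBlocks_conjTranspose, Matrix.fromBlocks_neg]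

lemma herm_adj {m : ℕ} (A : Matrix (Fin m ⊕ Fin m) (Fin m ⊕ Fin m) ℂ)
    (hA : A.IsHermitian) (w v : (Fin m ⊕ Fin m) → ℂ) :
    dotProduct (star (A.mulVec w)) v = dotProduct (star w) (A.mulVec v) := by
  rw [star_mulVec, ← dotProduct_mulVec, hA.eq]

lemma skewJ {m : ℕ} (w v : (Fin m ⊕ Fin m) → ℂ) :
    dotProduct (star ((symplJ m).mulVec w)) v = -dotProduct (star w) ((symplJ m).mulVec v) := by
  rw [star_mulVec, ← dotProduct_mulVec, symplJ_conjTranspose, neg_mulVec, dotProduct_neg]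

lemma bil {m : ℕ} (x y : ℤ → (Fin m ⊕ Fin m) → ℂ) (n : ℤ) :
    dotProduct (star (pShift y n)) ((symplJ m).mulVec (x (n+1) - x n))
      + dotProduct (star (y (n+1) - y n)) ((symplJ m).mulVec (pShift x n))
    = dotProduct (star (y (n+1))) ((symplJ m).mulVec (x (n+1)))
      - dotProduct (star (y n)) ((symplJ m).mulVec (x n)) := by
  simp only [symplJ, pShift, mulVec, dotProduct, Fintype.sum_sum_type, fromBlocks_apply₁₁,
    fromBlocks_apply₁₂, fromBlocks_apply₂₁, fromBlocks_apply₂₂, Matrix.zero_apply,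
    Matrix.neg_apply, Matrix.one_apply, Sum.elim_inl, Sum.elim_inr, Pi.sub_apply, Pi.star_apply,
    star_sub, Finset.sum_ite_eq, Finset.mem_univ, if_true, ite_mul, zero_mul, neg_mul,
    Finset.sum_neg_distrib, Finset.sum_ite_eq', mul_zero, zero_add, add_zero, mul_ite, mul_neg,
    Finset.sum_const_zero, one_mul, sub_zero, zero_sub, mul_one]
  simp only [← Finset.sum_neg_distrib, ← Finset.sum_add_distrib, ← Finset.sum_sub_distrib]
  exact Finset.sum_congr rfl fun i _ => by ring

lemma lagrange_pt {m : ℕ} (P : ℤ → Matrix (Fin m ⊕ Fin m) (Fin m ⊕ Fin m) ℂ)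
    (hP : ∀ n : ℤ, (P n).IsHermitian) (x y : ℤ → (Fin m ⊕ Fin m) → ℂ) (n : ℤ) :
    dotProduct (star (pShift y n)) (discrL P x n) -
        dotProduct (star (discrL P y n)) (pShift x n)
      = dotProduct (star (y (n + 1))) ((symplJ m).mulVec (x (n + 1))) -
        dotProduct (star (y n)) ((symplJ m).mulVec (x n)) := by
  simp only [discrL, star_sub, sub_dotProduct, dotProduct_sub]
  rw [herm_adj _ (hP n), skewJ]
  linear_combination bil x y n

/-- the discrete Lagrange identity: for `P(n)` Hermitian and all `s ≤ k`,
`Σ_{n=s}^{k} (R(y)(n)* l(x)(n) − (l(y)(n))* R(x)(n))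
  = y(k+1)* J x(k+1) − y(s)* J x(s)`. -/
theorem stmt_13 (m : ℕ) (hm : 1 ≤ m)
    (P : ℤ → Matrix (Fin m ⊕ Fin m) (Fin m ⊕ Fin m) ℂ)
    (hP : ∀ n : ℤ, (P n).IsHermitian)
    (x y : ℤ → (Fin m ⊕ Fin m) → ℂ) (s k : ℤ) (hsk : s ≤ k) :
    (∑ n ∈ Finset.Icc s k,
        (dotProduct (star (pShift y n)) (discrL P x n) -
          dotProduct (star (discrL P y n)) (pShift x n))) =
      dotProduct (star (y (k + 1))) ((symplJ m).mulVec (x (k + 1))) -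
        dotProduct (star (y s)) ((symplJ m).mulVec (x s)) := by
  refine Int.le_induction
    (motive := fun k _ => (∑ n ∈ Finset.Icc s k,
        (dotProduct (star (pShift y n)) (discrL P x n) -
          dotProduct (star (discrL P y n)) (pShift x n))) =
      dotProduct (star (y (k + 1))) ((symplJ m).mulVec (x (k + 1))) -
        dotProduct (star (y s)) ((symplJ m).mulVec (x s))) ?_ ?_ k hsk
  · rw [Finset.Icc_self, Finset.sum_singleton, lagrange_pt P hP x y s]
  · intro k hk ih
    have hins : Finset.Icc s (k + 1) = insert (k + 1) (Finset.Icc s k) := by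
      ext t
      simp only [Finset.mem_Icc, Finset.mem_insert]
      omega
    have hnm : (k + 1) ∉ Finset.Icc s k := by
      simp only [Finset.mem_Icc]; omega
    rw [hins, Finset.sum_insert hnm, ih, lagrange_pt P hP x y (k + 1)]
    ring
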